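/- Let S be a subspace of V such that B restricted to S is degenerate, i.e. there exists a nonzero x ∈ S with B x y = 0 for all y ∈ S. Then the set {x ∈ S : B x x = 0} of isotropic vectors of S is a linear subspace of V of dimension 1, namely the radical {x ∈ S : B x y = 0 for all y ∈ S} of the restriction of B to S; in particular, an isotropic subspace of V contains exactly one one-dimensional isotropic subspace, so two subspheres whose defining subspaces intersect in an isotropic subspace have exactly one common point. -/
import Mathlib


noncomputable section

/-- The Minkowski bilinear form of index 1 on `ℝ^{n+2}`:
`B x y = ∑_{i=0}^{n} x i * y i − x (n+1) * y (n+1)`. -/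
def mB (n : ℕ) : (Fin (n+2) → ℝ) →ₗ[ℝ] (Fin (n+2) → ℝ) →ₗ[ℝ] ℝ :=
  LinearMap.mk₂ ℝ
    (fun x y => ∑ i : Fin (n+2), (if (i : ℕ) = n+1 then (-1:ℝ) else 1) * x i * y i)
    (fun x x' y => by
      rw [← Finset.sum_add_distrib]
      exact Finset.sum_congr rfl fun i _ => by simp only [Pi.add_apply]; ring)
    (fun c x y => by
      rw [smul_eq_mul, Finset.mul_sum]
      exact Finset.sum_congr rfl fun i _ => by simp only [Pi.smul_apply, smul_eq_mul]; ring)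
    (fun x y y' => by
      rw [← Finset.sum_add_distrib]
      exact Finset.sum_congr rfl fun i _ => by simp only [Pi.add_apply]; ring)
    (fun c x y => by
      rw [smul_eq_mul, Finset.mul_sum]
      exact Finset.sum_congr rfl fun i _ => by simp only [Pi.smul_apply, smul_eq_mul]; ring)

/-- The orthogonal complement `S^⊥ = {x | ∀ s ∈ S, B x s = 0}` w.r.t. the Minkowski form. -/
def mperp (n : ℕ) (S : Submodule ℝ (Fin (n+2) → ℝ)) : Submodule ℝ (Fin (n+2) → ℝ) where
  carrier := {x | ∀ s ∈ S, mB n x s = 0}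
  zero_mem' := fun s _ => by simp
  add_mem' := fun ha hb s hs => by simp [ha s hs, hb s hs]
  smul_mem' := fun c a ha s hs => by simp [ha s hs]

/-- A subspace is pseudo-euclidean if the Minkowski form restricted to it
is nondegenerate and it contains a timelike vector. -/
def IsPseudoEuclidean (n : ℕ) (S : Submodule ℝ (Fin (n+2) → ℝ)) : Prop :=
  (∀ x ∈ S, (∀ y ∈ S, mB n x y = 0) → x = 0) ∧ ∃ x ∈ S, mB n x x < 0

lemma mB_eq (n : ℕ) (x y : Fin (n+2) → ℝ) :
    mB n x y = (∑ i : Fin (n+1), x i.castSucc * y i.castSucc)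
      - x (Fin.last (n+1)) * y (Fin.last (n+1)) := by
  show (∑ i : Fin (n+2), (if (i : ℕ) = n+1 then (-1:ℝ) else 1) * x i * y i) = _
  rw [Fin.sum_univ_castSucc]
  have h1 : ((Fin.last (n+1) : Fin (n+2)) : ℕ) = n+1 := rfl
  rw [h1]
  simp only [if_pos rfl]
  have : ∀ i : Fin (n+1),
      (if ((i.castSucc : Fin (n+2)) : ℕ) = n+1 then (-1:ℝ) else 1) * x i.castSucc * y i.castSucc
        = x i.castSucc * y i.castSucc := by
    intro i
    have : ((i.castSucc : Fin (n+2)) : ℕ) ≠ n+1 := by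
      simp [Fin.coe_castSucc]; omega
    rw [if_neg this, one_mul]
  rw [Finset.sum_congr rfl (fun i _ => this i)]
  simp only [if_true, neg_one_mul, sub_eq_add_neg, neg_mul, one_mul]

lemma key (n : ℕ) (x y : Fin (n+2) → ℝ) (hx : x ≠ 0)
    (hxx : mB n x x = 0) (hyy : mB n y y = 0) (hxy : mB n x y = 0) :
    ∃ c : ℝ, y = c • x := by
  set l := Fin.last (n+1)
  set a := x l with ha
  set b := y l with hb
  have Exx : (∑ i : Fin (n+1), x i.castSucc * x i.castSucc) = a * a := by
    have := mB_eq n x x; rw [hxx] at this; linarith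
  have Eyy : (∑ i : Fin (n+1), y i.castSucc * y i.castSucc) = b * b := by
    have := mB_eq n y y; rw [hyy] at this; linarith
  have Exy : (∑ i : Fin (n+1), x i.castSucc * y i.castSucc) = a * b := by
    have := mB_eq n x y; rw [hxy] at this; linarith
  have hane : a ≠ 0 := by
    intro h
    apply hx
    have hsum : (∑ i : Fin (n+1), x i.castSucc * x i.castSucc) = 0 := by
      rw [Exx, h, mul_zero]
    have hzero : ∀ i ∈ Finset.univ, x (Fin.castSucc i) * x (Fin.castSucc i) = 0 := by
      rw [← Finset.sum_eq_zero_iff_of_nonneg (fun i _ => mul_self_nonneg _)]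
      exact hsum
    funext j
    refine Fin.lastCases ?_ (fun i => ?_) j
    · exact h
    · have := hzero i (Finset.mem_univ i)
      exact mul_self_eq_zero.mp this
  refine ⟨b / a, ?_⟩
  have hsum : (∑ i : Fin (n+1),
      (y i.castSucc - (b/a) * x i.castSucc) * (y i.castSucc - (b/a) * x i.castSucc)) = 0 := by
    have expand : ∀ i : Fin (n+1),
        (y i.castSucc - (b/a) * x i.castSucc) * (y i.castSucc - (b/a) * x i.castSucc)
        = y i.castSucc * y i.castSucc - 2*(b/a) * (x i.castSucc * y i.castSucc)
          + (b/a)*(b/a) * (x i.castSucc * x i.castSucc) := fun i => by ring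
    rw [Finset.sum_congr rfl (fun i _ => expand i)]
    rw [Finset.sum_add_distrib, Finset.sum_sub_distrib, ← Finset.mul_sum, ← Finset.mul_sum,
      Exx, Eyy, Exy]
    field_simp
    ring
  have hzero : ∀ i ∈ Finset.univ,
      (y (Fin.castSucc i) - (b/a) * x (Fin.castSucc i)) *
        (y (Fin.castSucc i) - (b/a) * x (Fin.castSucc i)) = 0 := by
    rw [← Finset.sum_eq_zero_iff_of_nonneg (fun i _ => mul_self_nonneg _)]
    exact hsum
  funext j
  refine Fin.lastCases ?_ (fun i => ?_) j
  · show b = (b/a) * a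
    field_simp
  · have := mul_self_eq_zero.mp (hzero i (Finset.mem_univ i))
    show y i.castSucc = (b/a) * x i.castSucc
    linarith


/-- If the Minkowski form restricted to a subspace `S` is degenerate, then the
set of isotropic vectors of `S` coincides with the radical of the restriction
of the form to `S`, and it is a one-dimensional linear subspace; hence two
subspheres whose defining subspaces intersect in an isotropic subspace have
exactly one common point. -/
theorem isotropic_vectors_of_degenerate_subspace
    (n : ℕ) (hn : 0 < n) (S : Submodule ℝ (Fin (n+2) → ℝ))
    (hdeg : ∃ x ∈ S, x ≠ 0 ∧ ∀ y ∈ S, mB n x y = 0) :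
    {x : Fin (n+2) → ℝ | x ∈ S ∧ mB n x x = 0} =
      {x : Fin (n+2) → ℝ | x ∈ S ∧ ∀ y ∈ S, mB n x y = 0} ∧
    ∃ v : Fin (n+2) → ℝ, v ≠ 0 ∧
      {x : Fin (n+2) → ℝ | x ∈ S ∧ mB n x x = 0} =
        (Submodule.span ℝ {v} : Set (Fin (n+2) → ℝ)) := by
  obtain ⟨x₀, hx₀S, hx₀ne, hx₀rad⟩ := hdeg
  have hx₀iso : mB n x₀ x₀ = 0 := hx₀rad x₀ hx₀S
  have main : ∀ x, x ∈ S → mB n x x = 0 → ∃ c : ℝ, x = c • x₀ := fun x hxS hxx =>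
    key n x₀ x hx₀ne hx₀iso hxx (hx₀rad x hxS)
  constructor
  · ext x
    simp only [Set.mem_setOf_eq]
    constructor
    · rintro ⟨hxS, hxx⟩
      refine ⟨hxS, fun y hyS => ?_⟩
      obtain ⟨c, rfl⟩ := main x hxS hxx
      simp [hx₀rad y hyS]
    · rintro ⟨hxS, hrad⟩
      exact ⟨hxS, hrad x hxS⟩
  · refine ⟨x₀, hx₀ne, ?_⟩
    ext x
    simp only [Set.mem_setOf_eq, SetLike.mem_coe, Submodule.mem_span_singleton]
    constructor
    · rintro ⟨hxS, hxx⟩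
      obtain ⟨c, rfl⟩ := main x hxS hxx
      exact ⟨c, rfl⟩
    · rintro ⟨c, rfl⟩
      refine ⟨S.smul_mem c hx₀S, ?_⟩
      simp [hx₀iso]
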